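/- Let B_1, ..., B_m be disjoint finite vertex sets with degree function d, and let S_1, ..., S_k be disjoint sets covering them. Suppose (i) for each bucket B_t and clusters S_i, S_j with |B_t ∩ S_j| ≤ |B_t ∩ S_i|, we have vol(B_t ∩ S_j) ≤ η * vol(B_t ∩ S_i), and (ii) vol(B_t ∩ S_i) ≤ c * vol(S_i) for all t, i, for constants η ≥ 1, c > 0. Then sum_t |B_t| * vol(B_t) ≤ 2kηc * sum_i |S_i| * vol(S_i). -/

import Mathlib

open Finset

noncomputable def volsum {V : Type*} (d : V → ℝ) (A : Finset V) : ℝ :=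
  ∑ v ∈ A, d v

lemma volsum_nonneg {V : Type*} (d : V → ℝ) (hd : ∀ v, 0 < d v) (A : Finset V) :
    0 ≤ volsum d A :=
  Finset.sum_nonneg fun v _ => (hd v).le

/-- Let `B_1, ..., B_m` be disjoint buckets covered by disjoint
clusters `S_1, ..., S_k`.  If (i) `vol(B_t ∩ S_j) ≤ η vol(B_t ∩ S_i)` whenever
`|B_t ∩ S_j| ≤ |B_t ∩ S_i|`, and (ii) `vol(B_t ∩ S_i) ≤ c vol(S_i)` for all
`t, i`, then `∑_t |B_t| vol(B_t) ≤ 2 k η c ∑_i |S_i| vol(S_i)`. -/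
theorem sum_bucket_card_vol_le
    {V : Type*} [DecidableEq V]
    (m k : ℕ)
    (B : Fin m → Finset V) (S : Fin k → Finset V) (d : V → ℝ)
    (hd : ∀ v, 0 < d v)
    (hBdisj : ∀ t t', t ≠ t' → Disjoint (B t) (B t'))
    (hSdisj : ∀ i j, i ≠ j → Disjoint (S i) (S j))
    (hcover : ∀ t, ∀ v ∈ B t, ∃ i, v ∈ S i)
    (η c : ℝ) (hη : 1 ≤ η) (hc : 0 < c)
    (h1 : ∀ t i j, (B t ∩ S j).card ≤ (B t ∩ S i).card →
        volsum d (B t ∩ S j) ≤ η * volsum d (B t ∩ S i))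
    (h2 : ∀ t i, volsum d (B t ∩ S i) ≤ c * volsum d (S i)) :
    ∑ t, ((B t).card : ℝ) * volsum d (B t)
      ≤ 2 * k * η * c * ∑ i, ((S i).card : ℝ) * volsum d (S i) := by
  set a : Fin m → Fin k → ℝ := fun t i => ((B t ∩ S i).card : ℝ) with ha
  set v : Fin m → Fin k → ℝ := fun t i => volsum d (B t ∩ S i) with hv
  have ha0 : ∀ t i, 0 ≤ a t i := fun t i => Nat.cast_nonneg _
  have hv0 : ∀ t i, 0 ≤ v t i := fun t i => volsum_nonneg d hd _
  -- B t decomposes as disjoint union of B t ∩ S i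
  have hBeq : ∀ t, B t = Finset.univ.biUnion (fun i => B t ∩ S i) := by
    intro t
    ext x
    simp only [Finset.mem_biUnion, Finset.mem_univ, Finset.mem_inter, true_and]
    constructor
    · intro hx
      obtain ⟨i, hi⟩ := hcover t x hx
      exact ⟨i, hx, hi⟩
    · rintro ⟨i, hx, _⟩; exact hx
  have hpwd : ∀ t, ∀ i ∈ (Finset.univ : Finset (Fin k)), ∀ j ∈ Finset.univ,
      i ≠ j → Disjoint (B t ∩ S i) (B t ∩ S j) := by
    intro t i _ j _ hij
    exact Finset.disjoint_of_subset_left Finset.inter_subset_right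
      (Finset.disjoint_of_subset_right Finset.inter_subset_right (hSdisj i j hij))
  have hcard : ∀ t, ((B t).card : ℝ) = ∑ i, a t i := by
    intro t
    rw [hBeq t, Finset.card_biUnion (hpwd t)]
    push_cast
    rfl
  have hvol : ∀ t, volsum d (B t) = ∑ i, v t i := by
    intro t
    rw [hBeq t]
    exact Finset.sum_biUnion (hpwd t)
  -- per-bucket bound
  have hkey : ∀ t, ((B t).card : ℝ) * volsum d (B t)
      ≤ 2 * k * η * ∑ i, a t i * v t i := by
    intro t
    rw [hcard t, hvol t, Finset.sum_mul_sum]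
    have step : ∀ i j : Fin k, a t i * v t j ≤ η * (a t i * v t i + a t j * v t j) := by
      intro i j
      rcases le_or_gt ((B t ∩ S j).card) ((B t ∩ S i).card) with h | h
      · have hvle : v t j ≤ η * v t i := h1 t i j h
        calc a t i * v t j ≤ a t i * (η * v t i) :=
              mul_le_mul_of_nonneg_left hvle (ha0 t i)
          _ = η * (a t i * v t i) := by ring
          _ ≤ η * (a t i * v t i + a t j * v t j) := by
              have := mul_nonneg (ha0 t j) (hv0 t j)
              nlinarith [hη]
      · have hale : a t i ≤ a t j := by
          simpa [ha] using (Nat.cast_le (α := ℝ)).mpr h.le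
        calc a t i * v t j ≤ a t j * v t j :=
              mul_le_mul_of_nonneg_right hale (hv0 t j)
          _ ≤ η * (a t j * v t j) := le_mul_of_one_le_left
              (mul_nonneg (ha0 t j) (hv0 t j)) hη
          _ ≤ η * (a t i * v t i + a t j * v t j) := by
              have := mul_nonneg (ha0 t i) (hv0 t i)
              nlinarith [hη]
    calc ∑ i, ∑ j, a t i * v t j ≤ ∑ i, ∑ j, η * (a t i * v t i + a t j * v t j) := by
          apply Finset.sum_le_sum; intro i _
          apply Finset.sum_le_sum; intro j _
          exact step i j
      _ = 2 * k * η * ∑ i, a t i * v t i := by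
          simp only [mul_add, Finset.sum_add_distrib, Finset.sum_const, Finset.card_univ,
            Fintype.card_fin, nsmul_eq_mul, ← Finset.mul_sum]
          ring
  -- sum over t
  have hsum : ∑ t, ((B t).card : ℝ) * volsum d (B t)
      ≤ 2 * k * η * ∑ i, ∑ t, a t i * v t i := by
    calc ∑ t, ((B t).card : ℝ) * volsum d (B t)
        ≤ ∑ t, 2 * k * η * ∑ i, a t i * v t i :=
          Finset.sum_le_sum fun t _ => hkey t
      _ = 2 * k * η * ∑ i, ∑ t, a t i * v t i := by
          rw [← Finset.mul_sum, Finset.sum_comm]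
  have hfinal : ∀ i : Fin k, ∑ t, a t i * v t i ≤ c * (((S i).card : ℝ) * volsum d (S i)) := by
    intro i
    have hstep : ∀ t, a t i * v t i ≤ a t i * (c * volsum d (S i)) := by
      intro t
      exact mul_le_mul_of_nonneg_left (h2 t i) (ha0 t i)
    have hcardsum : ∑ t, a t i ≤ ((S i).card : ℝ) := by
      have hsub : Finset.univ.biUnion (fun t => B t ∩ S i) ⊆ S i := by
        intro x hx
        simp only [Finset.mem_biUnion, Finset.mem_inter] at hx
        obtain ⟨t, _, _, hxS⟩ := hx
        exact hxS
      have hd2 : ∀ t ∈ (Finset.univ : Finset (Fin m)), ∀ t' ∈ Finset.univ,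
          t ≠ t' → Disjoint (B t ∩ S i) (B t' ∩ S i) := by
        intro t _ t' _ htt
        exact Finset.disjoint_of_subset_left Finset.inter_subset_left
          (Finset.disjoint_of_subset_right Finset.inter_subset_left (hBdisj t t' htt))
      have := Finset.card_le_card hsub
      rw [Finset.card_biUnion hd2] at this
      calc ∑ t, a t i = ((∑ t, (B t ∩ S i).card : ℕ) : ℝ) := by push_cast; rfl
        _ ≤ ((S i).card : ℝ) := Nat.cast_le.mpr this
    calc ∑ t, a t i * v t i ≤ ∑ t, a t i * (c * volsum d (S i)) :=
          Finset.sum_le_sum fun t _ => hstep t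
      _ = (∑ t, a t i) * (c * volsum d (S i)) := by rw [Finset.sum_mul]
      _ ≤ ((S i).card : ℝ) * (c * volsum d (S i)) :=
          mul_le_mul_of_nonneg_right hcardsum
            (mul_nonneg hc.le (volsum_nonneg d hd _))
      _ = c * (((S i).card : ℝ) * volsum d (S i)) := by ring
  calc ∑ t, ((B t).card : ℝ) * volsum d (B t)
      ≤ 2 * k * η * ∑ i, ∑ t, a t i * v t i := hsum
    _ ≤ 2 * k * η * ∑ i, c * (((S i).card : ℝ) * volsum d (S i)) := by
        apply mul_le_mul_of_nonneg_left (Finset.sum_le_sum fun i _ => hfinal i)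
        positivity
    _ = 2 * k * η * c * ∑ i, ((S i).card : ℝ) * volsum d (S i) := by
        rw [← Finset.mul_sum]; ring
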